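/- Let e_I, e_J, e_K be orthogonal projections on a Hilbert space with e_J e_I = e_K (so e_K ≤ e_J and e_K ≤ e_I). Then for every vector f, ‖(1−e_I)f‖² + ‖(1−e_J)e_I f‖² = ‖(1−e_K)f‖². -/

import Mathlib

/-- Pythagorean identity for orthogonal projections with e_J e_I = e_K, proving the
combination rule for the normalizing constants in the β-Markov property. -/
theorem stmt_14 {E : Type*} [NormedAddCommGroup E] [InnerProductSpace ℝ E]
    (eI eJ eK : E →L[ℝ] E)
    (hIsym : ∀ x y : E, (inner ℝ (eI x) y : ℝ) = inner ℝ x (eI y)) (hI2 : eI ∘L eI = eI)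
    (hJsym : ∀ x y : E, (inner ℝ (eJ x) y : ℝ) = inner ℝ x (eJ y)) (hJ2 : eJ ∘L eJ = eJ)
    (hKsym : ∀ x y : E, (inner ℝ (eK x) y : ℝ) = inner ℝ x (eK y)) (hK2 : eK ∘L eK = eK)
    (hJI : eJ ∘L eI = eK) (f : E) :
    ‖f - eI f‖^2 + ‖eI f - eJ (eI f)‖^2 = ‖f - eK f‖^2 := by
  have hJIapp : ∀ x, eJ (eI x) = eK x := fun x => congrFun (congrArg (·.toFun) hJI) x
  -- eK = eI ∘ eJ as well
  have hIJapp : ∀ x, eI (eJ x) = eK x := by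
    intro x
    apply ext_inner_left ℝ
    intro v
    calc (inner ℝ v (eI (eJ x)) : ℝ) = inner ℝ (eI v) (eJ x) := (hIsym v (eJ x)).symm
      _ = inner ℝ (eJ (eI v)) x := (hJsym (eI v) x).symm
      _ = inner ℝ (eK v) x := by rw [hJIapp]
      _ = inner ℝ v (eK x) := hKsym v x
  have hIab : eI (f - eI f) = 0 := by
    have h := congrFun (congrArg (fun g : E →L[ℝ] E => (g : E → E)) hI2) f
    simp only [ContinuousLinearMap.coe_comp', Function.comp_apply] at h
    simp [map_sub, h]
  have horth : (inner ℝ (f - eI f) (eI f - eJ (eI f)) : ℝ) = 0 := by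
    have hb : eI f - eJ (eI f) = eI (f - eJ f) := by
      rw [map_sub, hJIapp, hIJapp]
    rw [hb, ← hIsym, hIab, inner_zero_left]
  have hsum : (f - eI f) + (eI f - eJ (eI f)) = f - eK f := by
    rw [hJIapp]; abel
  have := norm_add_sq_real (f - eI f) (eI f - eJ (eI f))
  rw [horth, hsum] at this
  linarith
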